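/- In a dagger category, let f : A ⟶ B and p : B ⟶ A satisfy (f ≫ p)† = f ≫ p and (p ≫ f)† = p ≫ f. Then the following four conditions are equivalent: (a) there exists j ∈ ℕ with f ≫ p ≫ (f ≫ f†)^j = (f ≫ f†)^j; (b) there exists k ∈ ℕ with (f ≫ f†)^k ≫ f ≫ p = (f ≫ f†)^k; (c) there exists m ∈ ℕ with p ≫ f ≫ (f† ≫ f)^m = (f† ≫ f)^m; (d) there exists n ∈ ℕ with (f† ≫ f)^n ≫ p ≫ f = (f† ≫ f)^n. -/
import Mathlib


open CategoryTheory

universe v u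

/-- A dagger on a category: an identity-on-objects contravariant involution. -/
structure Dagger (C : Type u) [Category.{v} C] where
  dag : ∀ {X Y : C}, (X ⟶ Y) → (Y ⟶ X)
  dag_id : ∀ X : C, dag (𝟙 X) = 𝟙 X
  dag_comp : ∀ {X Y Z : C} (f : X ⟶ Y) (g : Y ⟶ Z), dag (f ≫ g) = dag g ≫ dag f
  dag_dag : ∀ {X Y : C} (f : X ⟶ Y), dag (dag f) = f

/-- Iterated composition power of an endomorphism, with `cpow x 0 = 𝟙 A`. -/
def cpow {C : Type u} [Category.{v} C] {A : C} (x : A ⟶ A) : ℕ → (A ⟶ A)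
  | 0 => 𝟙 A
  | n + 1 => cpow x n ≫ x

/-- `p` is a †-Drazin inverse of `f`. -/
def IsDagDrazinInv {C : Type u} [Category.{v} C] (D : Dagger C)
    {A B : C} (f : A ⟶ B) (p : B ⟶ A) : Prop :=
  (∃ k : ℕ, cpow (f ≫ D.dag f) k ≫ f ≫ p = cpow (f ≫ D.dag f) k ∧
    p ≫ f ≫ cpow (D.dag f ≫ f) k = cpow (D.dag f ≫ f) k) ∧
  p ≫ f ≫ p = p ∧
  D.dag (f ≫ p) = f ≫ p ∧
  D.dag (p ≫ f) = p ≫ f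

lemma cpow_comm {C : Type u} [Category.{v} C] {A : C} (x : A ⟶ A) (n : ℕ) :
    x ≫ cpow x n = cpow x n ≫ x := by
  induction n with
  | zero => simp [cpow]
  | succ n ih => rw [cpow, ← Category.assoc, ← ih, Category.assoc]

lemma dag_cpow {C : Type u} [Category.{v} C] (D : Dagger C) {A : C} (x : A ⟶ A)
    (hx : D.dag x = x) (n : ℕ) : D.dag (cpow x n) = cpow x n := by
  induction n with
  | zero => simp [cpow, D.dag_id]
  | succ n ih => rw [cpow, D.dag_comp, hx, ih, cpow_comm]

lemma cpow_shift {C : Type u} [Category.{v} C] {A B : C} (u : A ⟶ B) (v : B ⟶ A) (k : ℕ) :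
    cpow (v ≫ u) (k + 1) = v ≫ cpow (u ≫ v) k ≫ u := by
  induction k with
  | zero => simp [cpow]
  | succ k ih => rw [cpow, ih]; simp only [cpow, Category.assoc]

/-- The four variants of axiom [D†.1] are equivalent in the presence of [D†.3] and [D†.4]. -/
theorem dagDrazin_D1_tfae {C : Type u} [Category.{v} C] (D : Dagger C)
    {A B : C} (f : A ⟶ B) (p : B ⟶ A)
    (h3 : D.dag (f ≫ p) = f ≫ p) (h4 : D.dag (p ≫ f) = p ≫ f) :
    List.TFAE
      [∃ j : ℕ, f ≫ p ≫ cpow (f ≫ D.dag f) j = cpow (f ≫ D.dag f) j,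
       ∃ k : ℕ, cpow (f ≫ D.dag f) k ≫ f ≫ p = cpow (f ≫ D.dag f) k,
       ∃ m : ℕ, p ≫ f ≫ cpow (D.dag f ≫ f) m = cpow (D.dag f ≫ f) m,
       ∃ n : ℕ, cpow (D.dag f ≫ f) n ≫ p ≫ f = cpow (D.dag f ≫ f) n] := by
  have hxd : D.dag (f ≫ D.dag f) = f ≫ D.dag f := by rw [D.dag_comp, D.dag_dag]
  have hyd : D.dag (D.dag f ≫ f) = D.dag f ≫ f := by rw [D.dag_comp, D.dag_dag]
  tfae_have 1 → 2 := by
    rintro ⟨j, hj⟩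
    refine ⟨j, ?_⟩
    calc cpow (f ≫ D.dag f) j ≫ f ≫ p
        = D.dag (f ≫ p ≫ cpow (f ≫ D.dag f) j) := by
          rw [D.dag_comp, D.dag_comp, dag_cpow D _ hxd, Category.assoc, ← D.dag_comp, h3]
      _ = cpow (f ≫ D.dag f) j := by rw [hj, dag_cpow D _ hxd]
  tfae_have 2 → 4 := by
    rintro ⟨k, hk⟩
    refine ⟨k + 1, ?_⟩
    rw [cpow_shift]
    simp only [Category.assoc]
    rw [reassoc_of% hk]
  tfae_have 4 → 3 := by
    rintro ⟨n, hn⟩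
    refine ⟨n, ?_⟩
    calc p ≫ f ≫ cpow (D.dag f ≫ f) n
        = D.dag (cpow (D.dag f ≫ f) n ≫ p ≫ f) := by
          rw [D.dag_comp, D.dag_comp, dag_cpow D _ hyd, ← D.dag_comp, h4, Category.assoc]
      _ = cpow (D.dag f ≫ f) n := by rw [hn, dag_cpow D _ hyd]
  tfae_have 3 → 1 := by
    rintro ⟨m, hm⟩
    refine ⟨m + 1, ?_⟩
    rw [cpow_shift]
    rw [reassoc_of% hm]
  tfae_finish
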